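/- There exists a universal constant C < ∞ such that for every 0 < ℓ ≤ 2·arsinh(1) and every 0 < δ < arsinh(1), the area of the δ-thin part of the collar C(ℓ) satisfies Area(C(ℓ, δ)) = ∫₀^{2π}∫_{−X_δ(ℓ)}^{X_δ(ℓ)} ρ_ℓ(s)² ds dθ = 2ℓ·tan(ℓ·X_δ(ℓ)/(2π)) ≤ 2ℓ·sinh(δ)/sinh(ℓ/2) ≤ C·δ. -/

import Mathlib

open Real Set MeasureTheory

/-- Conformal factor of the collar metric. -/
noncomputable def collarRho (ℓ s : ℝ) : ℝ :=
  ℓ / (2 * π * Real.cos (ℓ * s / (2 * π)))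

/-- Half-length of the `δ`-thin part of the collar. -/
noncomputable def collarXdelta (δ ℓ : ℝ) : ℝ :=
  if Real.sinh (ℓ / 2) ≤ Real.sinh δ then
    (2 * π / ℓ) * (π / 2 - Real.arcsin (Real.sinh (ℓ / 2) / Real.sinh δ))
  else 0


lemma sinh_le_aux {x : ℝ} (h0 : 0 ≤ x) (h1 : x ≤ Real.arsinh 1) :
    Real.sinh x ≤ 2 * x := by
  have hcosh : Real.cosh x ≤ 2 := by
    have h2 : Real.cosh x ≤ Real.cosh (Real.arsinh 1) := by
      rw [Real.cosh_le_cosh]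
      rw [abs_of_nonneg h0, abs_of_nonneg (Real.arsinh_nonneg_iff.mpr zero_le_one)]
      exact h1
    have : Real.cosh (Real.arsinh 1) = Real.sqrt 2 := by
      rw [Real.cosh_arsinh]; norm_num
    rw [this] at h2
    nlinarith [Real.sq_sqrt (by norm_num : (2:ℝ) ≥ 0), Real.sqrt_nonneg 2]
  have hint : Real.sinh x = ∫ t in (0:ℝ)..x, Real.cosh t := by
    rw [intervalIntegral.integral_eq_sub_of_hasDerivAt
      (fun t _ => Real.hasDerivAt_sinh t)
      (Real.continuous_cosh.intervalIntegrable _ _)]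
    simp
  have hb : (∫ t in (0:ℝ)..x, Real.cosh t) ≤ ∫ t in (0:ℝ)..x, (2:ℝ) := by
    apply intervalIntegral.integral_mono_on h0
    · exact Real.continuous_cosh.intervalIntegrable _ _
    · exact intervalIntegrable_const
    · intro t ht
      have h2 : Real.cosh t ≤ Real.cosh x := by
        rw [Real.cosh_le_cosh, abs_of_nonneg ht.1, abs_of_nonneg h0]; exact ht.2
      linarith
  simp only [intervalIntegral.integral_const, smul_eq_mul, sub_zero] at hb
  linarith [hint ▸ hb]

lemma inner_integral (a X : ℝ) (ha : 0 < a) (hX0 : 0 ≤ X) (hX : a * X < π / 2) :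
    ∫ s in (-X)..X, (a / Real.cos (a * s)) ^ 2 = 2 * a * Real.tan (a * X) := by
  have hcos : ∀ s ∈ Set.uIcc (-X) X, Real.cos (a * s) ≠ 0 := by
    intro s hs
    rw [Set.uIcc_of_le (by linarith)] at hs
    have h1 : -(π/2) < a * s := by nlinarith [hs.1, hs.2]
    have h2 : a * s < π/2 := by nlinarith [hs.1, hs.2]
    exact (Real.cos_pos_of_mem_Ioo ⟨h1, h2⟩).ne'
  have hderiv : ∀ s ∈ Set.uIcc (-X) X,
      HasDerivAt (fun s => a * Real.tan (a * s)) ((a / Real.cos (a * s)) ^ 2) s := by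
    intro s hs
    have h1 : HasDerivAt (fun s : ℝ => a * s) a s := by
      simpa using (hasDerivAt_id s).const_mul a
    have h2 := (Real.hasDerivAt_tan (hcos s hs)).comp s h1
    have h3 := h2.const_mul a
    have h4 : (a / Real.cos (a * s)) ^ 2 = a * (1 / Real.cos (a * s) ^ 2 * a) := by ring
    rw [h4]; exact h3
  have hcont : IntervalIntegrable (fun s => (a / Real.cos (a * s)) ^ 2)
      MeasureTheory.volume (-X) X := by
    apply ContinuousOn.intervalIntegrable
    apply ContinuousOn.pow
    exact continuousOn_const.div
      ((Real.continuous_cos.comp (continuous_const.mul continuous_id)).continuousOn) hcos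
  rw [intervalIntegral.integral_eq_sub_of_hasDerivAt hderiv hcont]
  rw [mul_neg, Real.tan_neg]
  ring

/-- The area of the `δ`-thin part of the collar `C(ℓ)` equals `2ℓ tan(ℓ X_δ(ℓ)/(2π))` and is
bounded by `2ℓ sinh δ / sinh(ℓ/2) ≤ C δ` for a universal constant `C`. -/
theorem area_thin_part :
    ∃ C : ℝ, 0 < C ∧
      ∀ ℓ δ : ℝ, 0 < ℓ → ℓ ≤ 2 * Real.arsinh 1 → 0 < δ → δ < Real.arsinh 1 →
        (∫ θ in (0:ℝ)..(2 * π), ∫ s in (-(collarXdelta δ ℓ))..(collarXdelta δ ℓ),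
            (collarRho ℓ s) ^ 2)
          = 2 * ℓ * Real.tan (ℓ * collarXdelta δ ℓ / (2 * π)) ∧
        2 * ℓ * Real.tan (ℓ * collarXdelta δ ℓ / (2 * π))
          ≤ 2 * ℓ * Real.sinh δ / Real.sinh (ℓ / 2) ∧
        2 * ℓ * Real.sinh δ / Real.sinh (ℓ / 2) ≤ C * δ := by
  refine ⟨8, by norm_num, fun ℓ δ hℓ hℓ2 hδ hδ2 => ?_⟩
  have hπ : 0 < π := Real.pi_pos
  set X := collarXdelta δ ℓ with hXdef
  have hsδ : 0 < Real.sinh δ := by rwa [Real.sinh_pos_iff]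
  have hsl : 0 < Real.sinh (ℓ / 2) := by rw [Real.sinh_pos_iff]; linarith
  have ha : 0 < ℓ / (2 * π) := by positivity
  have key : 0 ≤ X ∧ (ℓ / (2 * π)) * X < π / 2 ∧
      Real.tan ((ℓ / (2 * π)) * X) ≤ Real.sinh δ / Real.sinh (ℓ / 2) := by
    by_cases h : Real.sinh (ℓ / 2) ≤ Real.sinh δ
    · set t := Real.sinh (ℓ / 2) / Real.sinh δ with ht
      have ht0 : 0 < t := div_pos hsl hsδ
      have ht1 : t ≤ 1 := (div_le_one hsδ).mpr h
      have harc0 : 0 < Real.arcsin t := Real.arcsin_pos.mpr ht0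
      have harc2 : Real.arcsin t ≤ π / 2 := Real.arcsin_le_pi_div_two t
      have hXeq : X = (2 * π / ℓ) * (π / 2 - Real.arcsin t) := by
        rw [hXdef, collarXdelta, if_pos h]
      have haX : (ℓ / (2 * π)) * X = π / 2 - Real.arcsin t := by
        rw [hXeq]; field_simp
      refine ⟨?_, ?_, ?_⟩
      · rw [hXeq]
        apply mul_nonneg (by positivity)
        linarith
      · rw [haX]; linarith
      · rw [haX, Real.tan_pi_div_two_sub, Real.tan_arcsin, inv_div]
        have h1 : Real.sqrt (1 - t ^ 2) ≤ 1 := by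
          apply Real.sqrt_le_one.mpr; nlinarith
        calc Real.sqrt (1 - t ^ 2) / t ≤ 1 / t := by gcongr
          _ = Real.sinh δ / Real.sinh (ℓ / 2) := by rw [ht, one_div_div]
    · have hXeq : X = 0 := by rw [hXdef, collarXdelta, if_neg h]
      rw [hXeq]
      refine ⟨le_refl 0, by simpa using (by positivity : (0:ℝ) < π/2), ?_⟩
      rw [mul_zero, Real.tan_zero]
      positivity
  obtain ⟨hX0, haX, htan⟩ := key
  have harg : ℓ * X / (2 * π) = (ℓ / (2 * π)) * X := by ring
  have hrho : ∀ s, collarRho ℓ s ^ 2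
      = ((ℓ / (2 * π)) / Real.cos ((ℓ / (2 * π)) * s)) ^ 2 := by
    intro s
    rw [collarRho, div_div, mul_div_right_comm]
  refine ⟨?_, ?_, ?_⟩
  · simp only [hrho]
    rw [inner_integral _ _ ha hX0 haX, intervalIntegral.integral_const, harg]
    rw [smul_eq_mul]; field_simp; rw [sub_zero]
  · rw [harg]
    have := mul_le_mul_of_nonneg_left htan (by linarith : (0:ℝ) ≤ 2 * ℓ)
    calc 2 * ℓ * Real.tan (ℓ / (2 * π) * X)
        ≤ 2 * ℓ * (Real.sinh δ / Real.sinh (ℓ / 2)) := this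
      _ = 2 * ℓ * Real.sinh δ / Real.sinh (ℓ / 2) := by ring
  · have hs2 : ℓ / 2 < Real.sinh (ℓ / 2) := Real.self_lt_sinh_iff.mpr (by linarith)
    have hsd2 : Real.sinh δ ≤ 2 * δ := sinh_le_aux hδ.le hδ2.le
    rw [div_le_iff₀ hsl]
    nlinarith
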